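/- arXiv:2001.10874 — 6 statements merged into one kernel-verified Lean document; each statement's English description precedes it below -/
import Mathlib

section
/- Let f ∈ ℤ[T] be a monic irreducible polynomial of degree n with root α, and let K = ℚ(α). If 𝔞 is a fractional ℤ[α]-ideal in K, then 𝔞 is a free ℤ-module of rank n, and the matrix of multiplication by α with respect to any ℤ-basis of 𝔞 is an integer matrix whose characteristic polynomial is f. -/
set_option maxHeartbeats 1000000
set_option synthInstance.maxHeartbeats 400000

open Polynomial

/-- Auxiliary: the `ℚ`-span of a nonzero `ℤ[α]`-submodule of `K = ℚ(α)` is all of `K`. -/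
theorem aux_spanQ {K : Type*} [Field K] [NumberField K] (α : K)
    (hgen : Algebra.adjoin ℚ ({α} : Set K) = ⊤)
    (a : Submodule (Algebra.adjoin ℤ ({α} : Set K)) K) (ha : a ≠ ⊥) :
    Submodule.span ℚ (a : Set K) = ⊤ := by
  set V := Submodule.span ℚ (a : Set K) with hV
  have hαa : ∀ x ∈ a, α * x ∈ a := by
    intro x hx
    have h := a.smul_mem (⟨α, Algebra.self_mem_adjoin_singleton ℤ α⟩ :
      Algebra.adjoin ℤ ({α} : Set K)) hx
    rwa [Algebra.smul_def] at h
  have hαV : ∀ v ∈ V, α * v ∈ V := by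
    intro v hv
    have : V ≤ Submodule.comap (LinearMap.mulLeft ℚ α) V := by
      rw [hV, Submodule.span_le]
      intro w hw
      exact Submodule.subset_span (hαa w hw)
    exact this hv
  have key : ∀ y ∈ Algebra.adjoin ℚ ({α} : Set K), ∀ v ∈ V, y * v ∈ V := by
    intro y hy
    induction hy using Algebra.adjoin_induction with
    | mem z hz =>
      rcases hz with rfl
      exact hαV
    | algebraMap q =>
      intro v hv
      rw [← Algebra.smul_def]
      exact V.smul_mem q hv
    | add y z _ _ hy hz =>
      intro v hv
      rw [add_mul]
      exact V.add_mem (hy v hv) (hz v hv)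
    | mul y z _ _ hy hz =>
      intro v hv
      rw [mul_assoc]
      exact hy _ (hz v hv)
  obtain ⟨x, hx, hx0⟩ : ∃ x ∈ a, x ≠ (0 : K) := by
    by_contra h
    push_neg at h
    refine ha (le_antisymm (fun y hy => ?_) bot_le)
    simpa using h y hy
  rw [eq_top_iff]
  intro k _
  have hk : k * x⁻¹ ∈ Algebra.adjoin ℚ ({α} : Set K) := by rw [hgen]; trivial
  have := key _ hk x (Submodule.subset_span hx)
  rwa [mul_assoc, inv_mul_cancel₀ hx0, mul_one] at this

/-- Auxiliary: any finite `ℤ`-basis of a nonzero fractional ideal gives a `ℚ`-basis of `K`. -/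
theorem aux_basisK {K : Type*} [Field K] [NumberField K] (α : K)
    (hgen : Algebra.adjoin ℚ ({α} : Set K) = ⊤)
    (a : Submodule (Algebra.adjoin ℤ ({α} : Set K)) K) (ha : a ≠ ⊥)
    {ι : Type*} [Fintype ι] (b : Module.Basis ι ℤ a) :
    ∃ bQ : Module.Basis ι ℚ K, ∀ i, bQ i = (b i : K) := by
  classical
  set v : ι → K := fun i => (b i : K) with hv
  have hindep : LinearIndependent ℤ v := by
    have h := b.linearIndependent
    have := h.map' ((a.subtype).restrictScalars ℤ)
      (LinearMap.ker_eq_bot.mpr Subtype.val_injective)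
    exact this
  have hindepQ : LinearIndependent ℚ v := (LinearIndependent.iff_fractionRing ℤ ℚ).mp hindep
  have hspan : ⊤ ≤ Submodule.span ℚ (Set.range v) := by
    rw [← aux_spanQ α hgen a ha, Submodule.span_le]
    intro x hx
    lift x to a using hx
    have hx1 : (x : K) = ∑ i, (b.repr x i) • v i := by
      conv_lhs => rw [← b.sum_repr x]
      push_cast
      rfl
    rw [hx1]
    exact Submodule.sum_mem _ fun i _ =>
      Submodule.smul_of_tower_mem _ _ (Submodule.subset_span (Set.mem_range_self i))
  exact ⟨Module.Basis.mk hindepQ hspan, fun i => by simp [Module.Basis.mk_apply, hv]⟩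

/-- A fractional `ℤ[α]`-ideal `𝔞` in `K = ℚ(α)` is free of rank `n` over `ℤ`, and
the matrix of multiplication by `α` in any `ℤ`-basis has characteristic polynomial `f`. -/
theorem fractional_ideal_free_and_charpoly {K : Type*} [Field K] [NumberField K]
    (f : Polynomial ℤ) (n : ℕ) (hn : f.natDegree = n) (hmonic : f.Monic)
    (hirr : Irreducible f) (α : K) (hroot : Polynomial.aeval α f = 0)
    (hgen : Algebra.adjoin ℚ ({α} : Set K) = ⊤)
    (hdim : Module.finrank ℚ K = n)
    (a : Submodule (Algebra.adjoin ℤ ({α} : Set K)) K) (ha : a ≠ ⊥) (hafg : a.FG) :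
    Nonempty (Module.Basis (Fin n) ℤ a) ∧
    (∃ φ : a →ₗ[ℤ] a, ∀ x : a, (φ x : K) = α * (x : K)) ∧
    (∀ (φ : a →ₗ[ℤ] a), (∀ x : a, (φ x : K) = α * (x : K)) →
      ∀ b : Module.Basis (Fin n) ℤ a, (LinearMap.toMatrix b b φ).charpoly = f) := by
  classical
  have hint : IsIntegral ℤ α := ⟨f, hmonic, hroot⟩
  haveI hAfin : Module.Finite ℤ (Algebra.adjoin ℤ ({α} : Set K)) :=
    Module.Finite.iff_fg.mpr hint.fg_adjoin_singleton
  haveI : Module.Finite (Algebra.adjoin ℤ ({α} : Set K)) a := Module.Finite.iff_fg.mpr hafg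
  haveI : Module.Finite ℤ a := Module.Finite.trans (Algebra.adjoin ℤ ({α} : Set K)) a
  haveI : NoZeroSMulDivisors ℤ a := by
    refine ⟨fun {c x} h => ?_⟩
    have h2 : (c : ℤ) • (x : K) = 0 := by
      have := congrArg (Subtype.val) h
      simpa using this
    rcases smul_eq_zero.mp h2 with h1 | h1
    · exact Or.inl h1
    · exact Or.inr (Subtype.ext h1)
  haveI : Module.Free ℤ a := Module.free_of_finite_type_torsion_free'
  -- cardinality of any ℤ-basis of a is n
  have hcard : ∀ {ι : Type} [Fintype ι] (_ : Module.Basis ι ℤ a), Fintype.card ι = n := by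
    intro ι _ b
    obtain ⟨bQ, -⟩ := aux_basisK α hgen a ha b
    rw [← hdim, Module.finrank_eq_card_basis bQ]
  have hmem : ∀ x : a, α * (x : K) ∈ a := by
    intro x
    have h := a.smul_mem (⟨α, Algebra.self_mem_adjoin_singleton ℤ α⟩ :
      Algebra.adjoin ℤ ({α} : Set K)) x.2
    rwa [Algebra.smul_def] at h
  refine ⟨?_, ?_, ?_⟩
  · -- existence of a basis indexed by `Fin n`
    let bC := Module.Free.chooseBasis ℤ a
    obtain ⟨bQ, -⟩ := aux_basisK α hgen a ha bC
    have hc : Fintype.card (Module.Free.ChooseBasisIndex ℤ a) = n := by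
      rw [← hdim, Module.finrank_eq_card_basis bQ]
    exact ⟨bC.reindex (Fintype.equivFinOfCardEq hc)⟩
  · -- existence of multiplication-by-α
    refine ⟨{ toFun := fun x => ⟨α * x, hmem x⟩, map_add' := ?_, map_smul' := ?_ }, fun x => rfl⟩
    · intro x y; ext; simp [mul_add]
    · intro c x; ext; simp; ring
  · -- the charpoly computation
    intro φ hφ b
    obtain ⟨bQ, hbQ⟩ := aux_basisK α hgen a ha b
    set M := LinearMap.toMatrix b b φ with hMdef
    have hMat : LinearMap.toMatrix bQ bQ (Algebra.lmul ℚ K α) = M.map (Int.cast : ℤ → ℚ) := by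
      ext i j
      rw [LinearMap.toMatrix_apply, Matrix.map_apply]
      have h2 : (∑ k, M k j • b k) = φ (b j) := by
        simp only [hMdef, LinearMap.toMatrix_apply]
        exact b.sum_repr _
      have h3 : (Algebra.lmul ℚ K α) (bQ j) = ∑ k, ((M k j : ℚ)) • bQ k := by
        have hl : (Algebra.lmul ℚ K α) (bQ j) = α * bQ j := rfl
        rw [hl, hbQ, ← hφ (b j), ← h2]
        push_cast
        simp [hbQ, Int.cast_smul_eq_zsmul]
      rw [h3, Module.Basis.repr_sum_self]
    have hintQ : IsIntegral ℚ α := IsIntegral.of_finite ℚ α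
    have hmin : minpoly ℚ α = f.map (Int.castRingHom ℚ) := by
      refine (minpoly.eq_of_irreducible_of_monic ?_ ?_ (hmonic.map _)).symm
      · have := (hmonic.irreducible_iff_irreducible_map_fraction_map (K := ℚ)).mp hirr
        simpa using this
      · rw [show (Int.castRingHom ℚ) = algebraMap ℤ ℚ from rfl, Polynomial.aeval_map_algebraMap]
        exact hroot
    have hch : (Algebra.lmul ℚ K α).charpoly = f.map (Int.castRingHom ℚ) := by
      have hdvd : minpoly ℚ α ∣ (Algebra.lmul ℚ K α).charpoly := by
        apply minpoly.dvd
        have h0 : Algebra.lmul ℚ K ((aeval α) ((Algebra.lmul ℚ K α).charpoly)) = 0 := by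
          rw [← Polynomial.aeval_algHom_apply]
          exact LinearMap.aeval_self_charpoly _
        have h1 := congrArg (fun g : Module.End ℚ K => g 1) h0
        simpa using h1
      have hdeg1 : (Algebra.lmul ℚ K α).charpoly.natDegree = n := by
        rw [LinearMap.charpoly_natDegree]; exact hdim
      have hdeg2 : (minpoly ℚ α).natDegree = n := by
        rw [hmin, hmonic.natDegree_map, hn]
      rw [← hmin]
      refine Polynomial.eq_of_monic_of_associated (LinearMap.charpoly_monic _)
        (hmin ▸ hmonic.map (Int.castRingHom ℚ)) ?_
      exact (Polynomial.associated_of_dvd_of_natDegree_le hdvd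
        (LinearMap.charpoly_monic _).ne_zero (by rw [hdeg1, hdeg2])).symm
    have h4 : M.charpoly.map (Int.castRingHom ℚ) = f.map (Int.castRingHom ℚ) := by
      rw [← Matrix.charpoly_map, show M.map (Int.castRingHom ℚ) = M.map (Int.cast : ℤ → ℚ) from rfl,
        ← hMat, LinearMap.charpoly_toMatrix, hch]
    exact Polynomial.map_injective _ Int.cast_injective h4
end

section
/- Let f ∈ ℤ[T] be a monic irreducible polynomial of degree n with root α. If 𝔞 and 𝔟 = x·𝔞 (for some x ∈ K*) are equivalent fractional ℤ[α]-ideals in K = ℚ(α), then the matrices representing multiplication by α on 𝔞 and on 𝔟 (with respect to suitable ℤ-bases) are conjugate by an element of GL_n(ℤ). -/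
set_option maxHeartbeats 1000000
set_option synthInstance.maxHeartbeats 400000

/-- If `𝔟 = x·𝔞` are equivalent fractional `ℤ[α]`-ideals, then the matrices of
multiplication by `α` on `𝔞` and `𝔟` (in suitable `ℤ`-bases) are `GL_n(ℤ)`-conjugate. -/
theorem equiv_ideals_give_conjugate_matrices {K : Type*} [Field K] [NumberField K]
    (f : Polynomial ℤ) (n : ℕ) (hn : f.natDegree = n) (hmonic : f.Monic)
    (hirr : Irreducible f) (α : K) (hroot : Polynomial.aeval α f = 0)
    (hgen : Algebra.adjoin ℚ ({α} : Set K) = ⊤)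
    (hdim : Module.finrank ℚ K = n)
    (a b : Submodule (Algebra.adjoin ℤ ({α} : Set K)) K)
    (ha : a ≠ ⊥) (hafg : a.FG) (hb : b ≠ ⊥) (hbfg : b.FG)
    (x : K) (hx : x ≠ 0) (hab : (b : Set K) = (fun y => x * y) '' (a : Set K)) :
    ∃ (ba : Module.Basis (Fin n) ℤ a) (bb : Module.Basis (Fin n) ℤ b)
      (φa : a →ₗ[ℤ] a) (φb : b →ₗ[ℤ] b),
      (∀ y : a, (φa y : K) = α * (y : K)) ∧ (∀ y : b, (φb y : K) = α * (y : K)) ∧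
      ∃ U V : Matrix (Fin n) (Fin n) ℤ, U * V = 1 ∧ V * U = 1 ∧
        LinearMap.toMatrix bb bb φb = U * LinearMap.toMatrix ba ba φa * V := by
  classical
  have hαR : α ∈ Algebra.adjoin ℤ ({α} : Set K) := Algebra.subset_adjoin rfl
  have hint : IsIntegral ℤ α := ⟨f, hmonic, by simpa [Polynomial.aeval_def] using hroot⟩
  -- instances
  haveI : Module.Finite ℤ (Algebra.adjoin ℤ ({α} : Set K)) := ⟨(Submodule.fg_top _).mpr hint.fg_adjoin_singleton⟩
  haveI : Module.Finite (Algebra.adjoin ℤ ({α} : Set K)) a := Module.Finite.iff_fg.mpr hafg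
  haveI : Module.Finite ℤ a := Module.Finite.trans (Algebra.adjoin ℤ ({α} : Set K)) a
  haveI : NoZeroSMulDivisors ℤ a := by
    constructor
    rintro c y h
    have h' : (c : ℤ) • (y : K) = 0 := by
      have := congrArg (Subtype.val) h
      simpa using this
    rcases smul_eq_zero.mp h' with h1 | h1
    · exact Or.inl h1
    · exact Or.inr (Subtype.ext h1)
  -- stability of a under mult by α
  have hstab : ∀ y ∈ a, α * y ∈ a := by
    intro y hy
    have := a.smul_mem ⟨α, hαR⟩ hy
    simpa [Algebra.smul_def] using this
  -- the multiplication-by-α map on a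
  let φa : a →ₗ[ℤ] a :=
  { toFun := fun y => ⟨α * y, hstab y y.2⟩
    map_add' := fun y z => by ext; simp [mul_add]
    map_smul' := fun m y => by ext; simp only [RingHom.id_apply, Submodule.coe_smul_of_tower]; rw [mul_smul_comm] }
  -- span over ℚ of a is everything
  obtain ⟨v0, hv0a, hv0⟩ := (Submodule.ne_bot_iff a).mp ha
  set S := Submodule.span ℚ (a : Set K) with hSdef
  have hmulS : ∀ k ∈ Algebra.adjoin ℚ ({α} : Set K), ∀ s ∈ S, k * s ∈ S := by
    intro k hk
    induction hk using Algebra.adjoin_induction with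
    | mem z hz =>
      rcases hz with rfl
      intro s hs
      induction hs using Submodule.span_induction with
      | mem w hw => exact Submodule.subset_span (hstab w hw)
      | zero => simpa using Submodule.zero_mem S
      | add u v _ _ hu hv => rw [mul_add]; exact Submodule.add_mem S hu hv
      | smul q u _ hu => rw [mul_smul_comm]; exact Submodule.smul_mem S q hu
    | algebraMap r =>
      intro s hs
      have : (algebraMap ℚ K r) * s = r • s := by rw [Algebra.smul_def]
      rw [this]; exact Submodule.smul_mem S r hs
    | add u v _ _ hu hv => intro s hs; rw [add_mul]; exact Submodule.add_mem S (hu s hs) (hv s hs)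
    | mul u v _ _ hu hv => intro s hs; rw [mul_assoc]; exact hu _ (hv s hs)
  have hSK : ∀ k : K, ∀ s ∈ S, k * s ∈ S := fun k => hmulS k (hgen ▸ Algebra.mem_top)
  have hspan : S = ⊤ := by
    rw [eq_top_iff]
    intro k _
    have : k = (k * v0⁻¹) * v0 := by field_simp
    rw [this]
    exact hSK _ _ (Submodule.subset_span hv0a)
  -- finrank ℤ a = n
  set m := Module.finrank ℤ a with hmdef
  let c : Module.Basis (Fin m) ℤ a := Module.finBasis ℤ a
  let v : Fin m → K := fun i => (c i : K)
  have hvind : LinearIndependent ℤ v := by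
    have := c.linearIndependent
    exact this.map' (a.subtype.restrictScalars ℤ)
      (by rw [LinearMap.ker_eq_bot]; exact fun y z hyz => Subtype.ext hyz)
  have hvindQ : LinearIndependent ℚ v := (LinearIndependent.iff_fractionRing ℤ ℚ).mp hvind
  have hmn1 : m ≤ n := by
    have := hvindQ.fintype_card_le_finrank
    simpa [hdim] using this
  have hsub : (a : Set K) ⊆ (Submodule.span ℚ (Set.range v) : Set K) := by
    intro y hy
    have h1 : (⟨y, hy⟩ : a) ∈ Submodule.span ℤ (Set.range c) := by
      rw [c.span_eq]; trivial
    have h2 : y ∈ Submodule.map (a.subtype.restrictScalars ℤ) (Submodule.span ℤ (Set.range c)) :=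
      ⟨⟨y, hy⟩, h1, rfl⟩
    rw [Submodule.map_span] at h2
    have h3 : y ∈ Submodule.span ℤ (Set.range v) := by
      have : (a.subtype.restrictScalars ℤ) '' Set.range c = Set.range v := by
        ext w; simp [v, Set.range_comp]
      rwa [this] at h2
    exact Submodule.span_subset_span ℤ ℚ _ h3
  have hmn2 : n ≤ m := by
    have htop : Submodule.span ℚ (Set.range v) = ⊤ := by
      rw [eq_top_iff, ← hspan]
      exact Submodule.span_le.mpr hsub
    have := finrank_le_of_span_eq_top htop
    simpa [hdim] using this
  have hmn : m = n := le_antisymm hmn1 hmn2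
  -- bases
  let ba : Module.Basis (Fin n) ℤ a := c.reindex (finCongr hmn)
  -- the equivalence a ≃ b given by multiplication by x
  have memb : ∀ y ∈ a, x * y ∈ b := by
    intro y hy
    have : x * y ∈ (b : Set K) := by rw [hab]; exact ⟨y, hy, rfl⟩
    exact this
  have mema : ∀ z ∈ b, x⁻¹ * z ∈ a := by
    intro z hz
    have : z ∈ (fun y => x * y) '' (a : Set K) := by rw [← hab]; exact hz
    rcases this with ⟨y, hy, rfl⟩
    have : x⁻¹ * (x * y) = y := by field_simp
    rwa [this]
  let e : a ≃ₗ[ℤ] b :=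
  { toFun := fun y => ⟨x * y, memb y y.2⟩
    invFun := fun z => ⟨x⁻¹ * z, mema z z.2⟩
    left_inv := fun y => by ext; field_simp
    right_inv := fun z => by ext; field_simp
    map_add' := fun y z => by ext; simp [mul_add]
    map_smul' := fun m y => by
      ext
      simp only [RingHom.id_apply, Submodule.coe_smul_of_tower]
      rw [mul_smul_comm] }
  let bb : Module.Basis (Fin n) ℤ b := ba.map e
  let φb : b →ₗ[ℤ] b := e.toLinearMap ∘ₗ φa ∘ₗ e.symm.toLinearMap
  refine ⟨ba, bb, φa, φb, fun y => rfl, ?_, 1, 1, one_mul 1, one_mul 1, ?_⟩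
  · intro z
    show (x * (α * (x⁻¹ * (z : K))) : K) = α * (z : K)
    field_simp
  · rw [Matrix.one_mul, Matrix.mul_one]
    ext i j
    rw [LinearMap.toMatrix_apply, LinearMap.toMatrix_apply]
    show bb.repr (e (φa (e.symm (bb j)))) i = ba.repr (φa (ba j)) i
    rw [show bb j = e (ba j) from Module.Basis.map_apply ba e j, e.symm_apply_apply]
    simp [bb, Module.Basis.map_repr]
end

section
/- Let f ∈ ℤ[T] be monic irreducible of degree n with root α. For every integer matrix A ∈ M_n(ℤ) with f(A) = 0, there exists a fractional ℤ[α]-ideal 𝔞 in ℚ(α) and a ℤ-basis of 𝔞 with respect to which the matrix of multiplication by α on 𝔞 equals A. -/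
open Polynomial Matrix

set_option maxHeartbeats 2000000
set_option synthInstance.maxHeartbeats 400000

/-- Surjectivity in Latimer–MacDuffee: every integer matrix `A` with `f(A) = 0` is the
matrix of multiplication by `α` on some fractional `ℤ[α]`-ideal in some `ℤ`-basis. -/
theorem matrix_realized_by_fractional_ideal {K : Type*} [Field K] [NumberField K]
    (f : Polynomial ℤ) (n : ℕ) (hn : f.natDegree = n) (hmonic : f.Monic)
    (hirr : Irreducible f) (α : K) (hroot : Polynomial.aeval α f = 0)
    (hgen : Algebra.adjoin ℚ ({α} : Set K) = ⊤)
    (hdim : Module.finrank ℚ K = n)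
    (A : Matrix (Fin n) (Fin n) ℤ)
    (hA : Polynomial.aeval A f = 0) :
    ∃ a : Submodule (Algebra.adjoin ℤ ({α} : Set K)) K, a ≠ ⊥ ∧ a.FG ∧
      ∃ (b : Module.Basis (Fin n) ℤ a) (φ : a →ₗ[ℤ] a),
        (∀ x : a, (φ x : K) = α * (x : K)) ∧ LinearMap.toMatrix b b φ = A := by
  classical
  have hn0 : n ≠ 0 := by
    intro h
    exact hirr.not_isUnit (by
      have : f = 1 := hmonic.natDegree_eq_zero.mp (by rw [hn, h])
      simp [this])
  haveI : NeZero n := ⟨hn0⟩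
  haveI : Nonempty (Fin n) := Fin.pos_iff_nonempty.mp (Nat.pos_of_ne_zero hn0)
  -- Step 1 : the characteristic polynomial of `A` is `f`.
  set B : Matrix (Fin n) (Fin n) ℚ := A.map (algebraMap ℤ ℚ) with hBdef
  have hB0 : Polynomial.aeval B (f.map (algebraMap ℤ ℚ)) = 0 := by
    rw [Polynomial.aeval_map_algebraMap]
    have h := Polynomial.aeval_algHom_apply
      ((Algebra.ofId ℤ ℚ).mapMatrix (m := Fin n)) A f
    rw [hA] at h
    rw [map_zero] at h
    exact h
  have hfQ : Irreducible (f.map (algebraMap ℤ ℚ)) :=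
    (hmonic.irreducible_iff_irreducible_map_fraction_map).mp hirr
  have hBint : IsIntegral ℚ B := ⟨f.map (algebraMap ℤ ℚ), hmonic.map _, hB0⟩
  have hminB : minpoly ℚ B = f.map (algebraMap ℤ ℚ) := by
    obtain ⟨e, he⟩ := minpoly.dvd ℚ B hB0
    rcases hfQ.isUnit_or_isUnit he with hu | hu
    · exact absurd ((minpoly.monic hBint).eq_one_of_isUnit hu) (minpoly.ne_one ℚ B)
    · exact Polynomial.eq_of_monic_of_associated (minpoly.monic hBint) (hmonic.map _)
        ⟨hu.unit, by rw [IsUnit.unit_spec, ← he]⟩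
  have hcharB : B.charpoly = f.map (algebraMap ℤ ℚ) := by
    obtain ⟨c, hc⟩ : f.map (algebraMap ℤ ℚ) ∣ B.charpoly :=
      hminB ▸ minpoly.dvd ℚ B B.aeval_self_charpoly
    have hdegc : c.natDegree = 0 := by
      have h1 : B.charpoly.natDegree = n := by
        simp [Matrix.charpoly_natDegree_eq_dim]
      have h2 : (f.map (algebraMap ℤ ℚ)).natDegree = n := by
        rw [hmonic.natDegree_map, hn]
      have hc0 : c ≠ 0 := by
        rintro rfl
        simp only [mul_zero] at hc
        exact B.charpoly_monic.ne_zero hc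
      have := Polynomial.natDegree_mul ((hmonic.map (algebraMap ℤ ℚ)).ne_zero) hc0
      rw [← hc, h1, h2] at this
      omega
    have hcmonic : c.Monic := by
      have := B.charpoly_monic
      rw [hc] at this
      exact (hmonic.map (algebraMap ℤ ℚ)).of_mul_monic_left this
    rw [hc, hcmonic.natDegree_eq_zero.mp hdegc, mul_one]
  have hcharA : A.charpoly = f := by
    apply Polynomial.map_injective (algebraMap ℤ ℚ)
      (fun a b h => by exact_mod_cast h)
    rw [← Matrix.charpoly_map]
    exact hcharB
  -- Step 2 : find a nonzero row eigenvector of `A` over `K` with eigenvalue `α`.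
  set AK : Matrix (Fin n) (Fin n) K := A.map (algebraMap ℤ K) with hAKdef
  have hdet : (AK - α • 1).det = 0 := by
    have h1 : AK.charpoly = f.map (algebraMap ℤ K) := by
      rw [Matrix.charpoly_map, hcharA]
    have heval : AK.charpoly.eval α = 0 := by
      rw [h1, Polynomial.eval_map, ← Polynomial.aeval_def, hroot]
    have h3 : (Matrix.charmatrix AK).map (Polynomial.eval α)
        = α • (1 : Matrix (Fin n) (Fin n) K) - AK := by
      ext i j
      by_cases hij : i = j
      · subst hij
        simp [Matrix.charmatrix_apply_eq]
      · simp [Matrix.charmatrix_apply_ne _ _ _ hij, Matrix.one_apply_ne hij]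
    have h4 : (α • (1 : Matrix (Fin n) (Fin n) K) - AK).det = 0 := by
      rw [← h3]
      have h5 := RingHom.map_det (Polynomial.evalRingHom α) (Matrix.charmatrix AK)
      rw [RingHom.mapMatrix_apply, Polynomial.coe_evalRingHom] at h5
      rw [← h5]
      exact heval
    have : AK - α • 1 = -(α • (1 : Matrix (Fin n) (Fin n) K) - AK) :=
      (neg_sub _ _).symm
    rw [this, Matrix.det_neg, h4, mul_zero]
  obtain ⟨v, hv0, hv⟩ := Matrix.exists_vecMul_eq_zero_iff.mpr hdet
  have hrel : ∀ j, α * v j = ∑ i, A i j • v i := by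
    intro j
    have h := congrFun hv j
    simp only [Matrix.vecMul, dotProduct, Matrix.sub_apply, Matrix.smul_apply,
      Matrix.one_apply, smul_eq_mul, mul_ite, mul_one, mul_zero, mul_sub,
      Finset.sum_sub_distrib, Finset.sum_ite_eq, Finset.sum_ite_eq', Finset.mem_univ, if_true,
      Pi.zero_apply, sub_eq_zero] at h
    rw [mul_comm, ← h]
    refine Finset.sum_congr rfl fun i _ => ?_
    rw [hAKdef]
    simp [Matrix.map_apply, zsmul_eq_mul, mul_comm]
  -- Step 3 : the ℤ-span and ℚ-span of the `v i` are stable under multiplication by `α`.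
  have hstabZ : ∀ x ∈ Submodule.span ℤ (Set.range v),
      α * x ∈ Submodule.span ℤ (Set.range v) := by
    intro x hx
    induction hx using Submodule.span_induction with
    | mem y hy =>
      obtain ⟨j, rfl⟩ := hy
      rw [hrel j]
      exact Submodule.sum_mem _ fun i _ =>
        Submodule.smul_mem _ _ (Submodule.subset_span ⟨i, rfl⟩)
    | zero => simp
    | add y z hy hz ihy ihz => rw [mul_add]; exact Submodule.add_mem _ ihy ihz
    | smul m y hy ihy => rw [mul_smul_comm]; exact Submodule.smul_mem _ m ihy
  have hstabQ : ∀ x ∈ Submodule.span ℚ (Set.range v),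
      α * x ∈ Submodule.span ℚ (Set.range v) := by
    intro x hx
    induction hx using Submodule.span_induction with
    | mem y hy =>
      obtain ⟨j, rfl⟩ := hy
      rw [hrel j]
      refine Submodule.sum_mem _ fun i _ => ?_
      have hvi : v i ∈ Submodule.span ℚ (Set.range v) := Submodule.subset_span ⟨i, rfl⟩
      exact zsmul_mem hvi _
    | zero => simp
    | add y z hy hz ihy ihz => rw [mul_add]; exact Submodule.add_mem _ ihy ihz
    | smul m y hy ihy => rw [mul_smul_comm]; exact Submodule.smul_mem _ m ihy
  -- Step 4 : the `v i` span `K` over `ℚ`, hence are linearly independent.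
  obtain ⟨i0, hi0⟩ : ∃ i, v i ≠ 0 := by
    by_contra h
    push_neg at h
    exact hv0 (funext h)
  have key : ∀ y : K, ∀ w ∈ Submodule.span ℚ (Set.range v),
      y * w ∈ Submodule.span ℚ (Set.range v) := by
    intro y
    have hy : y ∈ Algebra.adjoin ℚ ({α} : Set K) := by rw [hgen]; trivial
    induction hy using Algebra.adjoin_induction with
    | mem z hz =>
      rw [Set.mem_singleton_iff] at hz
      subst hz
      exact hstabQ
    | algebraMap r =>
      intro w hw
      rw [← Algebra.smul_def]
      exact Submodule.smul_mem _ r hw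
    | add p q hp hq ihp ihq =>
      intro w hw
      rw [add_mul]
      exact Submodule.add_mem _ (ihp w hw) (ihq w hw)
    | mul p q hp hq ihp ihq =>
      intro w hw
      rw [mul_assoc]
      exact ihp _ (ihq w hw)
  have hWtop : Submodule.span ℚ (Set.range v) = ⊤ := by
    rw [eq_top_iff]
    intro x _
    have : x * (v i0)⁻¹ * v i0 = x := by field_simp
    rw [← this]
    exact key _ _ (Submodule.subset_span ⟨i0, rfl⟩)
  have hcard : Fintype.card (Fin n) = Module.finrank ℚ K := by simp [hdim]
  have hliQ : LinearIndependent ℚ v := by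
    have := (basisOfTopLeSpanOfCardEqFinrank v (le_of_eq hWtop.symm) hcard).linearIndependent
    rwa [coe_basisOfTopLeSpanOfCardEqFinrank] at this
  have hliZ : LinearIndependent ℤ v := by
    refine hliQ.restrict_scalars ?_
    rw [show (fun r : ℤ => r • (1 : ℚ)) = Int.cast from funext fun r => by simp]
    exact Int.cast_injective
  -- Step 5 : build the fractional ideal.
  set M0 : Submodule ℤ K := Submodule.span ℤ (Set.range v) with hM0def
  have hsmul : ∀ y : K, y ∈ Algebra.adjoin ℤ ({α} : Set K) → ∀ x ∈ M0, y * x ∈ M0 := by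
    intro y hy
    induction hy using Algebra.adjoin_induction with
    | mem z hz =>
      rw [Set.mem_singleton_iff] at hz
      subst hz
      exact hstabZ
    | algebraMap r =>
      intro x hx
      rw [← Algebra.smul_def]
      exact Submodule.smul_mem _ r hx
    | add p q hp hq ihp ihq =>
      intro x hx
      rw [add_mul]
      exact Submodule.add_mem _ (ihp x hx) (ihq x hx)
    | mul p q hp hq ihp ihq =>
      intro x hx
      rw [mul_assoc]
      exact ihp _ (ihq x hx)
  let a : Submodule (Algebra.adjoin ℤ ({α} : Set K)) K :=
    { carrier := M0
      add_mem' := fun hx hy => M0.add_mem hx hy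
      zero_mem' := M0.zero_mem
      smul_mem' := fun c x hx => by
        have hcx : c • x = (c : K) * x := by rw [Algebra.smul_def]; rfl
        rw [hcx]
        exact hsmul (c : K) c.2 x hx }
  have hmem : ∀ x : K, x ∈ a ↔ x ∈ M0 := fun _ => Iff.rfl
  have hvmem : ∀ i, v i ∈ a := fun i => Submodule.subset_span ⟨i, rfl⟩
  refine ⟨a, ?_, ?_, ?_⟩
  · intro hbot
    rw [hbot] at hvmem
    exact hi0 ((Submodule.mem_bot _).mp (hvmem i0))
  · refine ⟨Finset.image v Finset.univ, ?_⟩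
    have himg : ↑(Finset.image v Finset.univ) = Set.range v := by
      ext; simp
    rw [himg]
    apply le_antisymm
    · rw [Submodule.span_le]
      rintro x ⟨i, rfl⟩
      exact hvmem i
    · intro x hx
      exact Submodule.span_le_restrictScalars ℤ (Algebra.adjoin ℤ ({α} : Set K))
        (Set.range v) hx
  -- Step 6 : basis and multiplication map.
  let v' : Fin n → a := fun i => ⟨v i, hvmem i⟩
  let incl : a →ₗ[ℤ] K := a.subtype.restrictScalars ℤ
  have hliZ' : LinearIndependent ℤ v' := by
    apply LinearIndependent.of_comp incl
    have : ⇑incl ∘ v' = v := _root_.funext fun i => rfl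
    rwa [this]
  have hsp : ⊤ ≤ Submodule.span ℤ (Set.range v') := by
    rintro ⟨x, hx⟩ -
    have hx' : x ∈ Submodule.map incl (Submodule.span ℤ (Set.range v')) := by
      rw [Submodule.map_span, ← Set.range_comp,
        show ⇑incl ∘ v' = v from _root_.funext fun i => rfl]
      exact hx
    obtain ⟨y, hy, hxy⟩ := hx'
    have : y = ⟨x, hx⟩ := Subtype.ext (show (y : K) = x from hxy)
    exact this ▸ hy
  let b : Module.Basis (Fin n) ℤ a := Module.Basis.mk hliZ' hsp
  let φ : a →ₗ[ℤ] a :=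
    AddMonoidHom.toIntLinearMap
      { toFun := fun x => ⟨α * (x : K), hstabZ _ x.2⟩
        map_zero' := Subtype.ext (by simp)
        map_add' := fun x y => Subtype.ext (by simp [mul_add]) }
  refine ⟨b, φ, fun x => rfl, ?_⟩
  ext i j
  rw [LinearMap.toMatrix_apply]
  have hφ : φ (b j) = ∑ k, A k j • b k := by
    apply Subtype.ext
    have hcoe : ((∑ k, A k j • b k : a) : K) = ∑ k, A k j • ((b k : K)) := by
      rw [show (((∑ k, A k j • b k : a)) : K) = incl (∑ k, A k j • b k) from rfl,
        map_sum]
      exact Finset.sum_congr rfl fun k _ => incl.map_smul _ _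
    rw [hcoe]
    rw [show ((φ (b j) : a) : K) = α * ((b j : a) : K) from rfl, Module.Basis.mk_apply]
    rw [show ((v' j : a) : K) = v j from rfl, hrel j]
    refine Finset.sum_congr rfl fun k _ => ?_
    rw [Module.Basis.mk_apply]
  rw [hφ]
  exact congrFun (b.repr_sum_self fun k => A k j) i
end

section
/- Let f ∈ ℤ[T] be monic irreducible of degree n with root α. If 𝔞 and 𝔟 are fractional ℤ[α]-ideals in K = ℚ(α) such that the matrices of multiplication by α with respect to some ℤ-bases of 𝔞 and 𝔟 are GL_n(ℤ)-conjugate, then 𝔟 = x·𝔞 for some x ∈ K*. -/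
set_option maxHeartbeats 1000000 in
set_option synthInstance.maxHeartbeats 1000000 in
/-- Injectivity in Latimer–MacDuffee: if the multiplication-by-`α` matrices of two
fractional `ℤ[α]`-ideals (in some `ℤ`-bases) are `GL_n(ℤ)`-conjugate, then the ideals
differ by a factor `x ∈ K*`. -/
theorem conjugate_matrices_give_equiv_ideals {K : Type*} [Field K] [NumberField K]
    (f : Polynomial ℤ) (n : ℕ) (hn : f.natDegree = n) (hmonic : f.Monic)
    (hirr : Irreducible f) (α : K) (hroot : Polynomial.aeval α f = 0)
    (hgen : Algebra.adjoin ℚ ({α} : Set K) = ⊤)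
    (hdim : Module.finrank ℚ K = n)
    (a b : Submodule (Algebra.adjoin ℤ ({α} : Set K)) K)
    (ha : a ≠ ⊥) (hafg : a.FG) (hb : b ≠ ⊥) (hbfg : b.FG)
    (ba : Module.Basis (Fin n) ℤ a) (bb : Module.Basis (Fin n) ℤ b)
    (φa : a →ₗ[ℤ] a) (φb : b →ₗ[ℤ] b)
    (hφa : ∀ y : a, (φa y : K) = α * (y : K)) (hφb : ∀ y : b, (φb y : K) = α * (y : K))
    (U V : Matrix (Fin n) (Fin n) ℤ) (hUV : U * V = 1) (hVU : V * U = 1)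
    (hconj : LinearMap.toMatrix bb bb φb = U * LinearMap.toMatrix ba ba φa * V) :
    ∃ x : K, x ≠ 0 ∧ (b : Set K) = (fun y => x * y) '' (a : Set K) := by
  classical
  -- the linear isomorphisms determined by U and V
  set ψ : a →ₗ[ℤ] b := Matrix.toLin ba bb U with hψdef
  set ψ' : b →ₗ[ℤ] a := Matrix.toLin bb ba V with hψ'def
  have hψψ' : ∀ z : b, ψ (ψ' z) = z := by
    intro z
    have h1 : Matrix.toLin bb bb (U * V) = (Matrix.toLin ba bb U).comp (Matrix.toLin bb ba V) :=
      Matrix.toLin_mul bb ba bb U V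
    have h2 : Matrix.toLin bb bb (U * V) z = z := by rw [hUV]; simp
    rw [h1] at h2
    exact h2
  have hψ'ψ : ∀ y : a, ψ' (ψ y) = y := by
    intro y
    have h1 : Matrix.toLin ba ba (V * U) = (Matrix.toLin bb ba V).comp (Matrix.toLin ba bb U) :=
      Matrix.toLin_mul ba bb ba V U
    have h2 : Matrix.toLin ba ba (V * U) y = y := by rw [hVU]; simp
    rw [h1] at h2
    exact h2
  -- ψ intertwines the multiplication-by-α maps
  have hcomm0 : ψ.comp φa = φb.comp ψ := by
    apply (LinearMap.toMatrix ba bb).injective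
    rw [LinearMap.toMatrix_comp ba ba bb, LinearMap.toMatrix_comp ba bb bb]
    have hU : LinearMap.toMatrix ba bb ψ = U := by
      rw [hψdef, LinearMap.toMatrix_toLin]
    rw [hU, hconj]
    rw [Matrix.mul_assoc (U * LinearMap.toMatrix ba ba φa) V U, hVU, Matrix.mul_one]
  have hcomm : ∀ y : a, (ψ (φa y) : K) = α * (ψ y : K) := by
    intro y
    have h1 : ψ (φa y) = φb (ψ y) := LinearMap.congr_fun hcomm0 y
    rw [h1, hφb]
  -- smul coercions
  have hsmulR : ∀ (r : Algebra.adjoin ℤ ({α} : Set K)) (y : a), ((r • y : a) : K) = (r : K) * (y : K) := fun _ _ => rfl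
  have hsmulZa : ∀ (m : ℤ) (y : a), ((m • y : a) : K) = (m : K) * (y : K) := by
    intro m y; push_cast [zsmul_eq_mul]; rfl
  have hsmulZb : ∀ (m : ℤ) (z : b), ((m • z : b) : K) = (m : K) * (z : K) := by
    intro m z; push_cast [zsmul_eq_mul]; rfl
  have hαR : α ∈ Algebra.adjoin ℤ ({α} : Set K) := Algebra.subset_adjoin (Set.mem_singleton α)
  -- ψ is R-linear
  have key : ∀ (z : K) (hz : z ∈ Algebra.adjoin ℤ ({α} : Set K)) (y : a), (ψ ((⟨z, hz⟩ : Algebra.adjoin ℤ ({α} : Set K)) • y) : K) = z * (ψ y : K) := by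
    intro z hz
    induction hz using Algebra.adjoin_induction with
    | mem x hx =>
      intro y
      have hx' : x = α := hx
      have h1 : (⟨x, Algebra.subset_adjoin hx⟩ : Algebra.adjoin ℤ ({α} : Set K)) • y = φa y := by
        apply Subtype.ext
        rw [hsmulR, hφa]
        show x * (y : K) = α * (y : K)
        rw [hx']
      rw [h1, hcomm y, hx']
    | algebraMap m =>
      intro y
      have h1 : (⟨algebraMap ℤ K m, Subalgebra.algebraMap_mem _ m⟩ : Algebra.adjoin ℤ ({α} : Set K)) • y = m • y := by
        apply Subtype.ext
        rw [hsmulR, hsmulZa]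
        simp
      rw [h1, map_zsmul, hsmulZb]
      simp
    | add x w hx hw ihx ihw =>
      intro y
      have h1 : (⟨x + w, add_mem hx hw⟩ : Algebra.adjoin ℤ ({α} : Set K)) • y = (⟨x, hx⟩ : Algebra.adjoin ℤ ({α} : Set K)) • y + (⟨w, hw⟩ : Algebra.adjoin ℤ ({α} : Set K)) • y := by
        apply Subtype.ext
        push_cast [hsmulR]
        ring
      rw [h1, map_add]
      push_cast
      rw [ihx y, ihw y]
      ring
    | mul x w hx hw ihx ihw =>
      intro y
      have h1 : (⟨x * w, mul_mem hx hw⟩ : Algebra.adjoin ℤ ({α} : Set K)) • y = (⟨x, hx⟩ : Algebra.adjoin ℤ ({α} : Set K)) • ((⟨w, hw⟩ : Algebra.adjoin ℤ ({α} : Set K)) • y) := by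
        apply Subtype.ext
        rw [hsmulR, hsmulR, hsmulR]
        ring
      rw [h1, ihx ((⟨w, hw⟩ : Algebra.adjoin ℤ ({α} : Set K)) • y), ihw y]
      ring
  -- clearing denominators: every element of K is r/m with r ∈ Algebra.adjoin ℤ ({α} : Set K), m ∈ ℤ \ {0}
  have repK : ∀ z : K, ∃ (m : ℤ) (r : K), m ≠ 0 ∧ r ∈ Algebra.adjoin ℤ ({α} : Set K) ∧ (m : K) * z = r := by
    intro z
    have hz : z ∈ Algebra.adjoin ℚ ({α} : Set K) := hgen ▸ Algebra.mem_top
    rw [Algebra.adjoin_singleton_eq_range_aeval, AlgHom.mem_range] at hz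
    obtain ⟨P, hP⟩ := hz
    obtain ⟨m, hm⟩ := IsLocalization.integerNormalization_map_to_map (nonZeroDivisors ℤ) P
    refine ⟨(m : ℤ), Polynomial.aeval α (IsLocalization.integerNormalization (nonZeroDivisors ℤ) P),
      nonZeroDivisors.coe_ne_zero m, ?_, ?_⟩
    · rw [Algebra.adjoin_singleton_eq_range_aeval]
      exact ⟨_, rfl⟩
    · have h2 : Polynomial.aeval α ((IsLocalization.integerNormalization (nonZeroDivisors ℤ) P).map
          (algebraMap ℤ ℚ)) = Polynomial.aeval α ((m : ℤ) • P) := by rw [hm]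
      rw [Polynomial.aeval_map_algebraMap, map_zsmul, hP] at h2
      rw [h2, zsmul_eq_mul]
  -- pick a nonzero element of a
  rw [Submodule.ne_bot_iff] at ha
  obtain ⟨c, hcmem, hc0⟩ := ha
  set cA : a := ⟨c, hcmem⟩ with hcA
  have hψc0 : (ψ cA : K) ≠ 0 := by
    intro h0
    have h1 : ψ cA = 0 := Subtype.ext h0
    have h2 : cA = 0 := by rw [← hψ'ψ cA, h1, map_zero]
    exact hc0 (congrArg Subtype.val h2)
  set x : K := (ψ cA : K) / c with hx
  have hx0 : x ≠ 0 := div_ne_zero hψc0 hc0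
  have hmain : ∀ y : a, (ψ y : K) = x * (y : K) := by
    intro y
    obtain ⟨m, r, hm0, hrR, hmr⟩ := repK ((y : K) / c)
    have hmK : (m : K) ≠ 0 := Int.cast_ne_zero.mpr hm0
    have hB : (m : K) * (y : K) = r * c := by
      field_simp at hmr
      linear_combination hmr
    have heq : (m • y : a) = (⟨r, hrR⟩ : Algebra.adjoin ℤ ({α} : Set K)) • cA := by
      apply Subtype.ext
      rw [hsmulZa, hsmulR]
      exact hB
    have hA : (m : K) * (ψ y : K) = r * (ψ cA : K) := by
      have h1 : (ψ (m • y) : K) = (ψ ((⟨r, hrR⟩ : Algebra.adjoin ℤ ({α} : Set K)) • cA) : K) := by rw [heq]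
      rw [map_zsmul, hsmulZb, key r hrR cA] at h1
      exact h1
    have hgoal : (c : K) * ((m : K) * (ψ y : K)) = (ψ cA : K) * ((m : K) * (y : K)) := by
      rw [hA, hB]; ring
    have h3 : (c : K) * (ψ y : K) = (ψ cA : K) * (y : K) :=
      mul_left_cancel₀ hmK (by linear_combination hgoal)
    rw [hx]
    field_simp
    linear_combination h3
  refine ⟨x, hx0, ?_⟩
  ext z
  constructor
  · intro hz
    refine ⟨(ψ' ⟨z, hz⟩ : K), (ψ' ⟨z, hz⟩).2, ?_⟩
    have h1 : (ψ (ψ' ⟨z, hz⟩) : K) = z := by rw [hψψ' ⟨z, hz⟩]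
    show x * (ψ' ⟨z, hz⟩ : K) = z
    rw [← hmain (ψ' ⟨z, hz⟩), h1]
  · rintro ⟨y, hy, rfl⟩
    have h1 : (ψ ⟨y, hy⟩ : K) = x * y := hmain ⟨y, hy⟩
    show x * y ∈ (b : Set K)
    rw [← h1]
    exact (ψ ⟨y, hy⟩).2
end

section
/- Let f ∈ ℤ[T] be monic irreducible of degree n with root α, ℓ a prime dividing f(1), and A the matrix of multiplication by α on a fractional ℤ[α]-ideal 𝔞 with respect to a ℤ-basis. Then the element f(1)/(ℓ(1-α)) of K lies in (𝔞 : 𝔞) if and only if ℓ divides τ(I - A) = gcd(Cof(I - A)). -/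
/-- Cofactor matrix: transpose of the adjugate. -/
def Cof {n : ℕ} (A : Matrix (Fin n) (Fin n) ℤ) : Matrix (Fin n) (Fin n) ℤ :=
  Matrix.transpose (Matrix.adjugate A)

/-- τ(A) = gcd of the entries of the cofactor matrix of A. -/
def tau {n : ℕ} (A : Matrix (Fin n) (Fin n) ℤ) : ℤ :=
  Finset.univ.gcd (fun p : Fin n × Fin n => Cof A p.1 p.2)

lemma det_one_sub_eq_eval {n : ℕ} (A : Matrix (Fin n) (Fin n) ℤ) :
    ((1 : Matrix (Fin n) (Fin n) ℤ) - A).det = A.charpoly.eval 1 := by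
  rw [Matrix.charpoly]
  have h := RingHom.map_det (Polynomial.evalRingHom (1 : ℤ)) (Matrix.charmatrix A)
  rw [show (Polynomial.evalRingHom (1 : ℤ)) (Matrix.charmatrix A).det
      = Polynomial.eval 1 (Matrix.charmatrix A).det from rfl] at h
  rw [h]
  congr 1
  ext i j
  by_cases hij : i = j <;>
    simp [Matrix.charmatrix_apply, Matrix.one_apply, Matrix.diagonal_apply, hij,
      RingHom.mapMatrix_apply, Matrix.map_apply, Matrix.sub_apply]

set_option synthInstance.maxHeartbeats 1000000 in
set_option maxHeartbeats 1000000 in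
/-- For a prime `ℓ ∣ f(1)` and `A` the matrix of multiplication by `α` on a fractional
`ℤ[α]`-ideal `𝔞`: the element `f(1)/(ℓ(1-α))` of `K` lies in `(𝔞 : 𝔞)` iff
`ℓ ∣ τ(I - A)`. -/
theorem sigma_mem_multiplicator_iff {K : Type*} [Field K] [NumberField K]
    (f : Polynomial ℤ) (n : ℕ) (hn : f.natDegree = n) (hmonic : f.Monic)
    (hirr : Irreducible f) (α : K) (hroot : Polynomial.aeval α f = 0)
    (hgen : Algebra.adjoin ℚ ({α} : Set K) = ⊤)
    (hdim : Module.finrank ℚ K = n)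
    (ℓ : ℕ) (hℓ : ℓ.Prime) (hdvd : (ℓ : ℤ) ∣ f.eval 1) (hf1 : f.eval 1 ≠ 0)
    (a : Submodule (Algebra.adjoin ℤ ({α} : Set K)) K) (ha : a ≠ ⊥) (hafg : a.FG)
    (b : Module.Basis (Fin n) ℤ a) (φ : a →ₗ[ℤ] a)
    (hφ : ∀ x : a, (φ x : K) = α * (x : K))
    (A : Matrix (Fin n) (Fin n) ℤ) (hA : LinearMap.toMatrix b b φ = A)
    (hchar : A.charpoly = f) :
    (∀ y ∈ a, (((f.eval 1 : ℤ) : K) / ((ℓ : K) * (1 - α))) * y ∈ a) ↔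
      (ℓ : ℤ) ∣ tau ((1 : Matrix (Fin n) (Fin n) ℤ) - A) := by
  set M : Matrix (Fin n) (Fin n) ℤ := 1 - A with hM
  have hdet : M.det = f.eval 1 := by rw [hM, det_one_sub_eq_eval, hchar]
  have hα1 : (1 : K) - α ≠ 0 := by
    intro h
    have hα : α = 1 := by linear_combination -h
    rw [hα] at hroot
    have : ((f.eval 1 : ℤ) : K) = 0 := by
      rw [← hroot]
      simp [Polynomial.aeval_def, Polynomial.eval₂_at_one]
    exact hf1 (by exact_mod_cast this)
  have hℓK : (ℓ : K) ≠ 0 := Nat.cast_ne_zero.mpr hℓ.ne_zero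
  -- coercion of ℤ-smul
  have coe_smul : ∀ (c : ℤ) (x : a), ((c • x : a) : K) = (c : K) * (x : K) := by
    intro c x
    induction c using Int.induction_on with
    | zero => simp
    | succ k ih => push_cast [add_smul, one_smul]; push_cast at ih; rw [ih]; ring
    | pred k ih => push_cast [sub_smul, one_smul]; push_cast at ih; rw [ih]; ring
  set N : Matrix (Fin n) (Fin n) ℤ := M.adjugate with hN
  set θ : a →ₗ[ℤ] a := Matrix.toLin b b N with hθ
  have hψ : Matrix.toLin b b M = LinearMap.id - φ := by
    rw [hM, ← hA, map_sub, Matrix.toLin_one, Matrix.toLin_toMatrix]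
  have key : ∀ x : a, (1 - α) * ((θ x : a) : K) = ((f.eval 1 : ℤ) : K) * (x : K) := by
    intro x
    have h1 : (Matrix.toLin b b M) (θ x) = (f.eval 1 : ℤ) • x := by
      rw [hθ, ← LinearMap.comp_apply, ← Matrix.toLin_mul, Matrix.mul_adjugate, hdet,
        map_smul, Matrix.toLin_one, LinearMap.smul_apply, LinearMap.id_apply]
    have h2 : ((Matrix.toLin b b M) (θ x) : K) = (θ x : K) - α * (θ x : K) := by
      rw [hψ]; simp [hφ (θ x)]
    calc (1 - α) * ((θ x : a) : K) = (θ x : K) - α * (θ x : K) := by ring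
      _ = ((Matrix.toLin b b M) (θ x) : K) := h2.symm
      _ = ((f.eval 1 : ℤ) : K) * (x : K) := by rw [h1, coe_smul]
  have hθx : ∀ x : a, ((θ x : a) : K) = ((f.eval 1 : ℤ) : K) * (x : K) / (1 - α) := by
    intro x
    rw [eq_div_iff hα1]
    linear_combination key x
  have key2 : ∀ x : a, (((f.eval 1 : ℤ) : K) / ((ℓ : K) * (1 - α))) * (x : K) * (ℓ : K)
      = ((θ x : a) : K) := by
    intro x
    rw [hθx x]
    field_simp
  constructor
  · intro h
    apply Finset.dvd_gcd
    rintro ⟨i, j⟩ -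
    show (ℓ : ℤ) ∣ N j i
    set z : a := ⟨_, h (b i) (b i).2⟩ with hzdef
    have hz' : ((ℓ : ℤ) • z : a) = θ (b i) := by
      apply Subtype.ext
      rw [coe_smul]
      rw [← key2 (b i)]
      push_cast
      ring
    have hrepr : b.repr (θ (b i)) j = N j i := by
      rw [hθ, Matrix.toLin_self]
      simp [Finsupp.single_apply]
    rw [← hrepr, ← hz']
    simp only [map_smul, Finsupp.coe_smul, Pi.smul_apply, smul_eq_mul]
    exact Dvd.intro _ rfl
  · intro h y hy
    have hdiv : ∀ i j, (ℓ : ℤ) ∣ N i j := by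
      intro i j
      exact dvd_trans h (Finset.gcd_dvd (Finset.mem_univ (j, i)))
    set N' : Matrix (Fin n) (Fin n) ℤ := fun i j => N i j / ℓ with hN'
    have hNN' : N = (ℓ : ℤ) • N' := by
      ext i j
      simp only [hN', Matrix.smul_apply, smul_eq_mul]
      exact (Int.mul_ediv_cancel' (hdiv i j)).symm
    set x : a := ⟨y, hy⟩ with hx
    have hsplit : θ x = (ℓ : ℤ) • (Matrix.toLin b b N') x := by
      rw [hθ, hNN', map_smul, LinearMap.smul_apply]
    have hgoal : (((f.eval 1 : ℤ) : K) / ((ℓ : K) * (1 - α))) * y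
        = (((Matrix.toLin b b N') x : a) : K) := by
      have h2 := key2 x
      rw [hsplit, coe_smul] at h2
      have hy' : (x : K) = y := rfl
      rw [hy'] at h2
      push_cast at h2
      apply mul_right_cancel₀ hℓK
      rw [h2]; ring
    rw [hgoal]
    exact ((Matrix.toLin b b N') x).2
end

section
/- Let A be a simple abelian variety over a finite field k with Frobenius endomorphism F, and suppose φ ∈ End(A) (endomorphisms over the algebraic closure) satisfies [m] = φ ∘ (1 - F) for some integer m. Then φ commutes with every endomorphism of A, i.e., φ lies in the center of the endomorphism ring. -/
/-- Abstract version for the endomorphism ring `R = End(A)` of a simple abelian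
variety with Frobenius `F`: `F` is central (endomorphisms commute with Frobenius),
`1 - F` is an isogeny hence not a (right) zero divisor, and `[m] = φ ∘ (1 - F)`.
Then `φ` lies in the center of `R`. -/
theorem phi_central {R : Type*} [Ring R] (F φ : R) (m : ℤ)
    (hF : ∀ x : R, F * x = x * F)
    (hreg : ∀ x : R, x * (1 - F) = 0 → x = 0)
    (hm : (m : R) = φ * (1 - F)) :
    ∀ ψ : R, φ * ψ = ψ * φ := by
  intro ψ
  have key : (φ * ψ - ψ * φ) * (1 - F) = 0 := by
    have h1 : φ * (1 - F) * ψ = ψ * (φ * (1 - F)) := by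
      rw [← hm]; exact (Int.cast_commute m ψ).eq
    have h2 : (1 - F) * ψ = ψ * (1 - F) := by
      rw [sub_mul, mul_sub, one_mul, mul_one, hF]
    calc (φ * ψ - ψ * φ) * (1 - F)
        = φ * ((1 - F) * ψ) - ψ * (φ * (1 - F)) := by rw [h2]; noncomm_ring
      _ = 0 := by rw [← mul_assoc, h1, sub_self]
  exact sub_eq_zero.mp (hreg _ key)
end
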